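/- arXiv:2410.07984 — 2 statements merged into one kernel-verified Lean document; each statement's English description precedes it below -/
import Mathlib

section
/- Let W: X → Y be a discrete memoryless channel on finite alphabets and s > 0, and let R̂(s) be the right derivative at t = s of the function t ↦ t·I_{1+t}(W). Then: (i) if r ≥ R̂(s), then sup_{t≥0} t(r − I_{1+t}(W)) = sup_{t≥s} t(r − I_{1+t}(W)); (ii) if 0 ≤ r < R̂(s), then sup_{t≥s} t(r − I_{1+t}(W)) = s(r − I_{1+s}(W)); (iii) sup_{t≥0} t(R̂(s) − I_{1+t}(W)) = s(R̂(s) − I_{1+s}(W)). -/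
open scoped ENNReal NNReal BigOperators Classical
open Filter

noncomputable section

namespace RST

/-- Base-2 logarithm `ℝ≥0∞ → EReal`, with `log 0 = ⊥` and `log ⊤ = ⊤`. -/
def elog2 (s : ℝ≥0∞) : EReal :=
  if s = 0 then ⊥ else if s = ⊤ then ⊤ else ((Real.logb 2 s.toReal : ℝ) : EReal)

/-- Base-2 logarithm `EReal → EReal` (for nonnegative arguments). -/
def eLog2 (x : EReal) : EReal :=
  if x = ⊤ then ⊤ else if x ≤ 0 then ⊥ else ((Real.logb 2 x.toReal : ℝ) : EReal)

/-- Base-2 exponential `EReal → ℝ≥0∞`. -/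
def epow2 (x : EReal) : ℝ≥0∞ :=
  if x = ⊤ then ⊤ else if x = ⊥ then 0 else ENNReal.ofReal ((2 : ℝ) ^ x.toReal)

variable {X Y : Type*}

/-- A probability distribution on a finite alphabet, as an `ℝ≥0∞`-valued function. -/
def IsDist [Fintype X] (P : X → ℝ≥0∞) : Prop := ∑ x, P x = 1

/-- A discrete memoryless channel: every row is a probability distribution. -/
def IsChannel [Fintype X] [Fintype Y] (W : X → Y → ℝ≥0∞) : Prop := ∀ x, ∑ y, W x y = 1

/-- Order-`α` Rényi divergence (base 2), with the order `α ∈ [0,∞]` encoded as `ℝ≥0∞`.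
The conventions `0/0 = 0` and `a/0 = ∞` (for `a > 0`, `α > 1`) are built into `ℝ≥0∞`
arithmetic.  The second argument is allowed to be an arbitrary nonnegative vector. -/
def renyiD [Fintype X] (α : ℝ≥0∞) (P Q : X → ℝ≥0∞) : EReal :=
  if α = 0 then - elog2 (∑ x ∈ Finset.univ.filter fun x => P x ≠ 0, Q x)
  else if α = 1 then ∑ x, ((P x).toReal : EReal) * elog2 (P x / Q x)
  else if α = ⊤ then elog2 (⨆ x, P x / Q x)
  else (((α.toReal - 1)⁻¹ : ℝ) : EReal) *
    elog2 (∑ x, P x ^ α.toReal * Q x ^ (1 - α.toReal))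

/-- The `X`-marginal of a joint distribution on `X × Y`. -/
def margX [Fintype X] [Fintype Y] (P : X × Y → ℝ≥0∞) : X → ℝ≥0∞ := fun x => ∑ y, P (x, y)

/-- Order-`α` Rényi mutual information `I_α(X:Y)_P = min_{Q_Y} D_α(P‖P_X × Q_Y)`. -/
def renyiMI [Fintype X] [Fintype Y] (α : ℝ≥0∞) (P : X × Y → ℝ≥0∞) : EReal :=
  ⨅ Q : {Q : Y → ℝ≥0∞ // IsDist Q}, renyiD α P fun p => margX P p.1 * Q.1 p.2

/-- The joint input-output distribution `P_X · W`. -/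
def joint [Fintype X] [Fintype Y] (PX : X → ℝ≥0∞) (W : X → Y → ℝ≥0∞) : X × Y → ℝ≥0∞ :=
  fun p => PX p.1 * W p.1 p.2

/-- Order-`α` Rényi capacity `I_α(W) = max_{P_X} I_α(X:Y)_{P_X · W}`. -/
def renyiCap [Fintype X] [Fintype Y] (α : ℝ≥0∞) (W : X → Y → ℝ≥0∞) : EReal :=
  ⨆ P : {P : X → ℝ≥0∞ // IsDist P}, renyiMI α (joint P.1 W)

/-- `N` is a simulation of a channel `X → Y` with communication cost at most `c` bits:
shared randomness `K = Fin m` with distribution `PK`, a message set `{1,…,M}` with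
`log₂ M ≤ c`, an encoder `E` and a decoder `D`. -/
def IsSimulation [Fintype X] [Fintype Y] (c : ℝ) (N : X → Y → ℝ≥0∞) : Prop :=
  ∃ (m M : ℕ) (PK : Fin m → ℝ≥0∞) (E : X → Fin m → Fin M → ℝ≥0∞)
    (D : Fin M → Fin m → Y → ℝ≥0∞),
    0 < M ∧ Real.logb 2 M ≤ c ∧ (∑ k, PK k = 1) ∧
    (∀ x k, ∑ j, E x k j = 1) ∧ (∀ j k, ∑ y, D j k y = 1) ∧
    ∀ x y, N x y = ∑ k, ∑ j, PK k * E x k j * D j k y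

/-- `D_α(W, N) := max_x D_α(W(·|x) ‖ N(·|x))`. -/
def chD [Fintype X] [Fintype Y] (α : ℝ≥0∞) (W N : X → Y → ℝ≥0∞) : EReal :=
  ⨆ x, renyiD α (W x) (N x)

/-- `𝖣_α(W, c) := min_{N ∈ A(W,c)} D_α(W, N)`. -/
def simD [Fintype X] [Fintype Y] (α : ℝ≥0∞) (W : X → Y → ℝ≥0∞) (c : ℝ) : EReal :=
  ⨅ N : {N : X → Y → ℝ≥0∞ // IsSimulation c N}, chD α W N.1

/-- The `n`-fold memoryless extension `W^{×n}` of a channel `W`. -/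
def prodCh [Fintype X] [Fintype Y] (n : ℕ) (W : X → Y → ℝ≥0∞) :
    (Fin n → X) → (Fin n → Y) → ℝ≥0∞ :=
  fun xs ys => ∏ i, W (xs i) (ys i)

/-- A sequence of communication costs with rate at most `r`. -/
def RateOK (r : ℝ) (c : ℕ → ℝ) : Prop :=
  (∀ n, 0 ≤ c n) ∧ Filter.limsup (fun n : ℕ => ((c n / n : ℝ) : EReal)) Filter.atTop ≤ (r : EReal)

/-- Reliability function `E_rf^{(α)}(W, r)`. -/
def Erf [Fintype X] [Fintype Y] (α : ℝ≥0∞) (W : X → Y → ℝ≥0∞) (r : ℝ) : EReal :=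
  ⨆ c : {c : ℕ → ℝ // RateOK r c},
    Filter.liminf
      (fun n : ℕ => (((-1 : ℝ) / n : ℝ) : EReal) * eLog2 (simD α (prodCh n W) (c.1 n)))
      Filter.atTop

/-- Strong converse exponent `E_sc^{(α)}(W, r)`. -/
def Esc [Fintype X] [Fintype Y] (α : ℝ≥0∞) (W : X → Y → ℝ≥0∞) (r : ℝ) : EReal :=
  ⨅ c : {c : ℕ → ℝ // RateOK r c},
    Filter.limsup
      (fun n : ℕ => (((1 : ℝ) / n : ℝ) : EReal) * simD α (prodCh n W) (c.1 n))
      Filter.atTop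

/-- The `α`-Rényi simulation rate `R_RST^{(α)}(W)`. -/
def Rrst [Fintype X] [Fintype Y] (α : ℝ≥0∞) (W : X → Y → ℝ≥0∞) : EReal :=
  ⨅ c : {c : ℕ → ℝ // (∀ n, 0 ≤ c n) ∧
      Filter.limsup (fun n : ℕ => simD α (prodCh n W) (c n)) Filter.atTop = 0},
    Filter.limsup (fun n : ℕ => ((c.1 n / n : ℝ) : EReal)) Filter.atTop

/-- n-fold product of a joint distribution on `X × Y`, as a distribution on pairs of
sequences. -/
def prodJoint [Fintype X] [Fintype Y] (n : ℕ) (P : X × Y → ℝ≥0∞) :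
    (Fin n → X) × (Fin n → Y) → ℝ≥0∞ :=
  fun p => ∏ i, P (p.1 i, p.2 i)

/-- n-fold product distribution. -/
def prodDist [Fintype X] (n : ℕ) (P : X → ℝ≥0∞) : (Fin n → X) → ℝ≥0∞ :=
  fun xs => ∏ i, P (xs i)

/-- The type (empirical count vector) of a sequence. -/
def seqType [Fintype Y] [DecidableEq Y] {n : ℕ} (ys : Fin n → Y) : Y → ℕ :=
  fun y => (Finset.univ.filter fun i => ys i = y).card

/-- The cardinality of the type class of a sequence. -/
def typeClassCard [Fintype Y] [DecidableEq Y] {n : ℕ} (ys : Fin n → Y) : ℕ :=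
  (Finset.univ.filter fun zs : Fin n → Y => seqType zs = seqType ys).card

/-- The number of types of sequences in `Y^n`. -/
def numTypes (Y : Type*) [Fintype Y] [DecidableEq Y] (n : ℕ) : ℕ :=
  (Finset.univ.image fun ys : Fin n → Y => seqType ys).card

/-- `Φ_{Y^n}`: the uniform mixture over type classes of `Y^n`. -/
def PhiY (Y : Type*) [Fintype Y] [DecidableEq Y] (n : ℕ) : (Fin n → Y) → ℝ≥0∞ :=
  fun ys => ((numTypes Y n : ℝ≥0∞) * (typeClassCard ys : ℝ≥0∞))⁻¹

end RST

namespace RST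

section Lemma22Aux

variable {X Y : Type*} [Fintype X] [Fintype Y]

/-- Real finite-sum Hölder / weighted AM-GM consequence. -/
theorem real_holder {ι : Type*} [Fintype ι] (f g : ι → ℝ) (hf : ∀ y, 0 ≤ f y)
    (hg : ∀ y, 0 ≤ g y) {a b : ℝ} (ha : 0 < a) (hb : 0 < b) (hab : a + b = 1) :
    ∑ y, f y ^ a * g y ^ b ≤ (∑ y, f y) ^ a * (∑ y, g y) ^ b := by
  set F := ∑ y, f y with hF
  set G := ∑ y, g y with hG
  have hF0 : 0 ≤ F := Finset.sum_nonneg fun y _ => hf y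
  have hG0 : 0 ≤ G := Finset.sum_nonneg fun y _ => hg y
  rcases eq_or_lt_of_le hF0 with hF | hF
  · have hfz : ∀ y ∈ Finset.univ, f y = 0 :=
      fun y _ => le_antisymm (hF ▸ Finset.single_le_sum (fun i _ => hf i) (Finset.mem_univ y)) (hf y)
    have : ∀ y ∈ Finset.univ, f y ^ a * g y ^ b = 0 := by
      intro y hy
      rw [hfz y hy, Real.zero_rpow ha.ne', zero_mul]
    rw [Finset.sum_congr rfl this, Finset.sum_const, smul_zero]
    positivity
  rcases eq_or_lt_of_le hG0 with hG' | hG'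
  · have hgz : ∀ y ∈ Finset.univ, g y = 0 :=
      fun y _ => le_antisymm (hG' ▸ Finset.single_le_sum (fun i _ => hg i) (Finset.mem_univ y)) (hg y)
    have : ∀ y ∈ Finset.univ, f y ^ a * g y ^ b = 0 := by
      intro y hy
      rw [hgz y hy, Real.zero_rpow hb.ne', mul_zero]
    rw [Finset.sum_congr rfl this, Finset.sum_const, smul_zero]
    positivity
  -- main case : F, G > 0
  have key : ∀ y, f y ^ a * g y ^ b ≤ (F ^ a * G ^ b) * (a * (f y / F) + b * (g y / G)) := by
    intro y
    have amgm := Real.geom_mean_le_arith_mean2_weighted ha.le hb.le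
      (div_nonneg (hf y) hF0) (div_nonneg (hg y) hG0) hab
    calc f y ^ a * g y ^ b
        = (F ^ a * G ^ b) * ((f y / F) ^ a * (g y / G) ^ b) := by
          rw [Real.div_rpow (hf y) hF0, Real.div_rpow (hg y) hG0]
          field_simp
      _ ≤ (F ^ a * G ^ b) * (a * (f y / F) + b * (g y / G)) := by
          apply mul_le_mul_of_nonneg_left amgm
          positivity
  calc ∑ y, f y ^ a * g y ^ b
      ≤ ∑ y, (F ^ a * G ^ b) * (a * (f y / F) + b * (g y / G)) :=
        Finset.sum_le_sum fun y _ => key y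
    _ = (F ^ a * G ^ b) * (a * (F / F) + b * (G / G)) := by
        rw [← Finset.mul_sum]
        congr 1
        rw [Finset.sum_add_distrib, ← Finset.mul_sum, ← Finset.mul_sum,
          ← Finset.sum_div, ← Finset.sum_div]
    _ = F ^ a * G ^ b := by
        rw [div_self hF.ne', div_self hG'.ne', mul_one, mul_one, hab, mul_one]

theorem enn_holder {ι : Type*} [Fintype ι] (f g : ι → ℝ≥0∞) {a b : ℝ}
    (ha : 0 < a) (hb : 0 < b) (hab : a + b = 1) :
    ∑ y, f y ^ a * g y ^ b ≤ (∑ y, f y) ^ a * (∑ y, g y) ^ b := by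
  by_cases hF0 : ∑ y, f y = 0
  · have hfz : ∀ y, f y = 0 := by
      intro y
      exact le_antisymm (hF0 ▸ Finset.single_le_sum (fun i _ => zero_le) (Finset.mem_univ y))
        (zero_le)
    have : ∀ y ∈ Finset.univ, f y ^ a * g y ^ b = 0 := by
      intro y _
      rw [hfz y, ENNReal.zero_rpow_of_pos ha, zero_mul]
    rw [Finset.sum_congr rfl this, Finset.sum_const, smul_zero]
    exact zero_le
  by_cases hG0 : ∑ y, g y = 0
  · have hgz : ∀ y, g y = 0 := by
      intro y
      exact le_antisymm (hG0 ▸ Finset.single_le_sum (fun i _ => zero_le) (Finset.mem_univ y))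
        (zero_le)
    have : ∀ y ∈ Finset.univ, f y ^ a * g y ^ b = 0 := by
      intro y _
      rw [hgz y, ENNReal.zero_rpow_of_pos hb, mul_zero]
    rw [Finset.sum_congr rfl this, Finset.sum_const, smul_zero]
    exact zero_le
  by_cases hFt : ∑ y, f y = ⊤
  · rw [hFt, ENNReal.top_rpow_of_pos ha, ENNReal.top_mul]
    · exact le_top
    · simp only [ne_eq, ENNReal.rpow_eq_zero_iff, not_or, not_and_or]
      constructor
      · exact Or.inl hG0
      · exact Or.inr (by linarith)
  by_cases hGt : ∑ y, g y = ⊤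
  · rw [hGt, ENNReal.top_rpow_of_pos hb, ENNReal.mul_top]
    · exact le_top
    · simp only [ne_eq, ENNReal.rpow_eq_zero_iff, not_or, not_and_or]
      constructor
      · exact Or.inl hF0
      · exact Or.inr (by linarith)
  -- finite case: transfer to ℝ
  have hfinf : ∀ y, f y ≠ ⊤ := fun y =>
    ne_top_of_le_ne_top hFt (Finset.single_le_sum (fun i _ => zero_le) (Finset.mem_univ y))
  have hginf : ∀ y, g y ≠ ⊤ := fun y =>
    ne_top_of_le_ne_top hGt (Finset.single_le_sum (fun i _ => zero_le) (Finset.mem_univ y))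
  have hterm : ∀ y, f y ^ a * g y ^ b ≠ ⊤ := fun y =>
    ENNReal.mul_ne_top (ENNReal.rpow_ne_top_of_nonneg ha.le (hfinf y))
      (ENNReal.rpow_ne_top_of_nonneg hb.le (hginf y))
  have hLHS : ∑ y, f y ^ a * g y ^ b ≠ ⊤ :=
    ENNReal.sum_ne_top.2 fun y _ => hterm y
  have hRHS : (∑ y, f y) ^ a * (∑ y, g y) ^ b ≠ ⊤ :=
    ENNReal.mul_ne_top (ENNReal.rpow_ne_top_of_nonneg ha.le hFt)
      (ENNReal.rpow_ne_top_of_nonneg hb.le hGt)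
  rw [← ENNReal.toReal_le_toReal hLHS hRHS]
  have hL : (∑ y, f y ^ a * g y ^ b).toReal = ∑ y, (f y).toReal ^ a * (g y).toReal ^ b := by
    rw [ENNReal.toReal_sum (fun y _ => hterm y)]
    congr 1
    ext y
    rw [ENNReal.toReal_mul, ← ENNReal.toReal_rpow, ← ENNReal.toReal_rpow]
  have hR : ((∑ y, f y) ^ a * (∑ y, g y) ^ b).toReal
      = (∑ y, (f y).toReal) ^ a * (∑ y, (g y).toReal) ^ b := by
    rw [ENNReal.toReal_mul, ← ENNReal.toReal_rpow, ← ENNReal.toReal_rpow,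
      ENNReal.toReal_sum (fun y _ => hfinf y), ENNReal.toReal_sum (fun y _ => hginf y)]
  rw [hL, hR]
  exact real_holder _ _ (fun y => ENNReal.toReal_nonneg) (fun y => ENNReal.toReal_nonneg) ha hb hab



/-- `A_P^t(y) = ∑_x P x · W(x,y)^{1+t}`. -/
def Afun (W : X → Y → ℝ≥0∞) (P : X → ℝ≥0∞) (t : ℝ) (y : Y) : ℝ≥0∞ :=
  ∑ x, P x * W x y ^ (1 + t)

/-- `N_P^t = ∑_y A_P^t(y)^{1/(1+t)}`. -/
def Nfun (W : X → Y → ℝ≥0∞) (P : X → ℝ≥0∞) (t : ℝ) : ℝ≥0∞ :=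
  ∑ y, (Afun W P t y) ^ (1 + t)⁻¹

/-- `h_P(t) = (1+t)·log₂ N_P^t`. -/
def hfun (W : X → Y → ℝ≥0∞) (P : X → ℝ≥0∞) (t : ℝ) : ℝ :=
  (1 + t) * Real.logb 2 (Nfun W P t).toReal

variable {W : X → Y → ℝ≥0∞} {P : X → ℝ≥0∞} {t : ℝ}

theorem dist_le_one (hP : IsDist P) (x : X) : P x ≤ 1 :=
  hP ▸ Finset.single_le_sum (fun i _ => zero_le) (Finset.mem_univ x)

theorem dist_ne_top (hP : IsDist P) (x : X) : P x ≠ ⊤ :=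
  ne_top_of_le_ne_top ENNReal.one_ne_top (dist_le_one hP x)

theorem dist_exists_ne_zero (hP : IsDist P) : ∃ x, P x ≠ 0 := by
  by_contra h
  push_neg at h
  have : (1 : ℝ≥0∞) = 0 := by
    rw [← hP, Finset.sum_eq_zero fun x _ => h x]
  simp at this

theorem A_le_one (hW : IsChannel W) (hP : IsDist P) (ht : 0 ≤ t) (y : Y) :
    Afun W P t y ≤ 1 := by
  calc Afun W P t y ≤ ∑ x, P x * 1 := by
        refine Finset.sum_le_sum fun x _ => ?_
        exact mul_le_mul_right (ENNReal.rpow_le_one (dist_le_one (hW x) y) (by linarith)) _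
    _ = 1 := by simp only [mul_one]; exact hP

theorem A_ne_top (hW : IsChannel W) (hP : IsDist P) (ht : 0 ≤ t) (y : Y) :
    Afun W P t y ≠ ⊤ :=
  ne_top_of_le_ne_top ENNReal.one_ne_top (A_le_one hW hP ht y)

theorem N_pos [Nonempty Y] (hW : IsChannel W) (hP : IsDist P) (ht : 0 ≤ t) :
    0 < Nfun W P t := by
  obtain ⟨x, hx⟩ := dist_exists_ne_zero hP
  obtain ⟨y, hy⟩ := dist_exists_ne_zero (hW x)
  have hA : Afun W P t y ≠ 0 := by
    have h1 : P x * W x y ^ (1 + t) ≤ Afun W P t y := by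
      rw [Afun]
      exact Finset.single_le_sum (f := fun x => P x * W x y ^ (1 + t))
        (fun i _ => zero_le) (Finset.mem_univ x)
    have h2 : P x * W x y ^ (1 + t) ≠ 0 := by
      apply mul_ne_zero hx
      simp only [ne_eq, ENNReal.rpow_eq_zero_iff, not_or, not_and_or]
      exact ⟨Or.inl hy, Or.inl (dist_ne_top (hW x) y)⟩
    exact fun h => h2 (le_antisymm (h ▸ h1) (zero_le))
  have : (0 : ℝ≥0∞) < Afun W P t y ^ (1 + t)⁻¹ :=
    ENNReal.rpow_pos (pos_iff_ne_zero.2 hA) (A_ne_top hW hP ht y)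
  refine lt_of_lt_of_le this ?_
  rw [Nfun]
  exact Finset.single_le_sum (f := fun y => Afun W P t y ^ (1 + t)⁻¹)
    (fun i _ => zero_le) (Finset.mem_univ y)

theorem N_le_card (hW : IsChannel W) (hP : IsDist P) (ht : 0 ≤ t) :
    Nfun W P t ≤ (Fintype.card Y : ℝ≥0∞) := by
  calc Nfun W P t ≤ ∑ _y : Y, (1 : ℝ≥0∞) := by
        refine Finset.sum_le_sum fun y _ => ?_
        exact ENNReal.rpow_le_one (A_le_one hW hP ht y) (by positivity)
    _ = (Fintype.card Y : ℝ≥0∞) := by simp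

theorem N_ne_top (hW : IsChannel W) (hP : IsDist P) (ht : 0 ≤ t) : Nfun W P t ≠ ⊤ :=
  ne_top_of_le_ne_top (ENNReal.natCast_ne_top _) (N_le_card hW hP ht)

theorem sumA_le_one (hW : IsChannel W) (hP : IsDist P) (ht : 0 ≤ t) :
    ∑ y, Afun W P t y ≤ 1 := by
  have hcomm : ∑ y, Afun W P t y = ∑ x, ∑ y, P x * W x y ^ (1 + t) := by
    simp only [Afun]
    exact Finset.sum_comm

  rw [hcomm]
  calc ∑ x, ∑ y, P x * W x y ^ (1 + t)
      ≤ ∑ x, P x * 1 := by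
        refine Finset.sum_le_sum fun x _ => ?_
        rw [← Finset.mul_sum]
        refine mul_le_mul_right ?_ _
        calc ∑ y, W x y ^ (1 + t) ≤ ∑ y, W x y := by
              refine Finset.sum_le_sum fun y _ => ?_
              calc W x y ^ (1 + t) ≤ W x y ^ (1 : ℝ) :=
                    ENNReal.rpow_le_rpow_of_exponent_ge (dist_le_one (hW x) y) (by linarith)
                _ = W x y := ENNReal.rpow_one _
          _ = 1 := hW x
    _ = 1 := by simp only [mul_one]; exact hP

theorem N_zero (hW : IsChannel W) (hP : IsDist P) : Nfun W P 0 = 1 := by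
  have : ∀ y, (Afun W P 0 y : ℝ≥0∞) ^ ((1 : ℝ) + 0)⁻¹ = ∑ x, P x * W x y := by
    intro y
    rw [show ((1:ℝ)+0)⁻¹ = 1 by norm_num, ENNReal.rpow_one, Afun]
    refine Finset.sum_congr rfl fun x _ => ?_
    rw [show ((1:ℝ)+0) = 1 by norm_num, ENNReal.rpow_one]
  rw [Nfun, Finset.sum_congr rfl fun y _ => this y, Finset.sum_comm]
  calc ∑ x, ∑ y, P x * W x y = ∑ x, P x := by
        refine Finset.sum_congr rfl fun x _ => ?_
        rw [← Finset.mul_sum, hW x, mul_one]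
    _ = 1 := hP

theorem hfun_zero (hW : IsChannel W) (hP : IsDist P) : hfun W P 0 = 0 := by
  rw [hfun, N_zero hW hP]
  simp

theorem N_le_pow [Nonempty Y] (hW : IsChannel W) (hP : IsDist P) (ht : 0 < t) :
    Nfun W P t ≤ (Fintype.card Y : ℝ≥0∞) ^ (t / (1 + t)) := by
  have h1t : (0:ℝ) < 1 + t := by linarith
  have key : ∑ y, Afun W P t y ^ (1 + t)⁻¹ * (1 : ℝ≥0∞) ^ (t / (1 + t))
      ≤ (∑ y, Afun W P t y) ^ (1 + t)⁻¹ * (∑ _y : Y, (1:ℝ≥0∞)) ^ (t / (1 + t)) :=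
    enn_holder _ _ (by positivity) (by positivity) (by field_simp)
  simp only [ENNReal.one_rpow, mul_one] at key
  rw [Nfun]
  refine le_trans key ?_
  simp only [Finset.sum_const, Finset.card_univ, nsmul_eq_mul, mul_one]
  refine mul_le_of_le_one_left (zero_le) ?_
  exact ENNReal.rpow_le_one (sumA_le_one hW hP ht.le) (by positivity)

theorem N_toReal_pos [Nonempty Y] (hW : IsChannel W) (hP : IsDist P) (ht : 0 ≤ t) :
    0 < (Nfun W P t).toReal :=
  ENNReal.toReal_pos (N_pos hW hP ht).ne' (N_ne_top hW hP ht)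

theorem hfun_le [Nonempty Y] (hW : IsChannel W) (hP : IsDist P) (ht : 0 ≤ t) :
    hfun W P t ≤ t * Real.logb 2 (Fintype.card Y) := by
  rcases eq_or_lt_of_le ht with h | h
  · rw [← h, hfun_zero hW hP]
    simp
  have h1t : (0:ℝ) < 1 + t := by linarith
  have hcard : (1:ℝ) ≤ (Fintype.card Y : ℝ) := by
    have := Fintype.card_pos (α := Y)
    exact_mod_cast this
  have hNt : (Nfun W P t).toReal ≤ (Fintype.card Y : ℝ) ^ (t / (1 + t)) := by
    have := ENNReal.toReal_mono
      (ENNReal.rpow_ne_top_of_nonneg (by positivity) (ENNReal.natCast_ne_top _))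
      (N_le_pow hW hP h)
    rwa [← ENNReal.toReal_rpow, ENNReal.toReal_natCast] at this
  have hlog : Real.logb 2 (Nfun W P t).toReal
      ≤ (t / (1 + t)) * Real.logb 2 (Fintype.card Y) := by
    calc Real.logb 2 (Nfun W P t).toReal
        ≤ Real.logb 2 ((Fintype.card Y : ℝ) ^ (t / (1 + t))) :=
          Real.logb_le_logb_of_le (by norm_num) (N_toReal_pos hW hP ht) hNt
      _ = (t / (1 + t)) * Real.logb 2 (Fintype.card Y) :=
          Real.logb_rpow_eq_mul_logb_of_pos (by linarith)
  calc hfun W P t ≤ (1 + t) * ((t / (1 + t)) * Real.logb 2 (Fintype.card Y)) := by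
        rw [hfun]
        exact mul_le_mul_of_nonneg_left hlog h1t.le
    _ = t * Real.logb 2 (Fintype.card Y) := by field_simp

theorem hfun_convex [Nonempty Y] (hW : IsChannel W) (hP : IsDist P) :
    ConvexOn ℝ (Set.Ici (0:ℝ)) (hfun W P) := by
  refine ⟨convex_Ici 0, ?_⟩
  intro t₁ ht₁ t₂ ht₂ θ θ' hθ hθ' hθθ
  rcases eq_or_lt_of_le hθ with h0 | hθpos
  · have : θ' = 1 := by linarith
    simp [← h0, this]
  rcases eq_or_lt_of_le hθ' with h0' | hθ'pos
  · have : θ = 1 := by linarith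
    simp [← h0', this]
  simp only [Set.mem_Ici] at ht₁ ht₂
  simp only [smul_eq_mul]
  set t := θ * t₁ + θ' * t₂ with htdef
  have ht : 0 ≤ t := by positivity
  have hα : (0:ℝ) < 1 + t := by linarith
  have hα₁ : (0:ℝ) < 1 + t₁ := by linarith
  have hα₂ : (0:ℝ) < 1 + t₂ := by linarith
  set a : ℝ := θ * (1 + t₁) / (1 + t) with hadef
  set b : ℝ := θ' * (1 + t₂) / (1 + t) with hbdef
  have hab : a + b = 1 := by
    rw [hadef, hbdef, ← add_div, div_eq_one_iff_eq hα.ne']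
    ring_nf
    nlinarith [hθθ]
  have ha : 0 < a := by positivity
  have hb : 0 < b := by positivity
  -- Step A: pointwise bound on Afun
  have stepA : ∀ y, Afun W P t y ≤ Afun W P t₁ y ^ θ * Afun W P t₂ y ^ θ' := by
    intro y
    have hpt : ∀ x, P x * W x y ^ (1 + t)
        = (P x * W x y ^ (1 + t₁)) ^ θ * (P x * W x y ^ (1 + t₂)) ^ θ' := by
      intro x
      rw [ENNReal.mul_rpow_of_ne_top (dist_ne_top hP x)
          (ENNReal.rpow_ne_top_of_nonneg hα₁.le (dist_ne_top (hW x) y)),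
        ENNReal.mul_rpow_of_ne_top (dist_ne_top hP x)
          (ENNReal.rpow_ne_top_of_nonneg hα₂.le (dist_ne_top (hW x) y))]
      rw [← ENNReal.rpow_mul, ← ENNReal.rpow_mul]
      rw [show P x ^ θ * W x y ^ ((1+t₁)*θ) * (P x ^ θ' * W x y ^ ((1+t₂)*θ'))
          = (P x ^ θ * P x ^ θ') * (W x y ^ ((1+t₁)*θ) * W x y ^ ((1+t₂)*θ')) by ring]
      rw [← ENNReal.rpow_add_of_nonneg _ _ hθ hθ', hθθ, ENNReal.rpow_one,
        ← ENNReal.rpow_add_of_nonneg _ _ (by positivity) (by positivity),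
        show (1+t₁)*θ + (1+t₂)*θ' = 1 + t by simp only [htdef]; ring_nf; linarith]
    calc Afun W P t y
        = ∑ x, (P x * W x y ^ (1 + t₁)) ^ θ * (P x * W x y ^ (1 + t₂)) ^ θ' := by
          rw [Afun]
          exact Finset.sum_congr rfl fun x _ => hpt x
      _ ≤ (∑ x, P x * W x y ^ (1 + t₁)) ^ θ * (∑ x, P x * W x y ^ (1 + t₂)) ^ θ' :=
          enn_holder _ _ hθpos hθ'pos hθθ
      _ = Afun W P t₁ y ^ θ * Afun W P t₂ y ^ θ' := by rw [Afun, Afun]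
  -- Step B: pointwise bound after taking the (1+t)⁻¹ power
  have stepB : ∀ y, Afun W P t y ^ (1+t)⁻¹
      ≤ (Afun W P t₁ y ^ (1+t₁)⁻¹) ^ a * (Afun W P t₂ y ^ (1+t₂)⁻¹) ^ b := by
    intro y
    calc Afun W P t y ^ (1+t)⁻¹
        ≤ (Afun W P t₁ y ^ θ * Afun W P t₂ y ^ θ') ^ (1+t)⁻¹ :=
          ENNReal.rpow_le_rpow (stepA y) (by positivity)
      _ = Afun W P t₁ y ^ (θ * (1+t)⁻¹) * Afun W P t₂ y ^ (θ' * (1+t)⁻¹) := by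
          rw [ENNReal.mul_rpow_of_nonneg _ _ (by positivity),
            ← ENNReal.rpow_mul, ← ENNReal.rpow_mul]
      _ = (Afun W P t₁ y ^ (1+t₁)⁻¹) ^ a * (Afun W P t₂ y ^ (1+t₂)⁻¹) ^ b := by
          rw [← ENNReal.rpow_mul, ← ENNReal.rpow_mul]
          congr 1
          · congr 1
            rw [hadef]
            field_simp
          · congr 1
            rw [hbdef]
            field_simp
  -- Step C: Hölder over y
  have stepC : Nfun W P t ≤ Nfun W P t₁ ^ a * Nfun W P t₂ ^ b := by
    calc Nfun W P t
        ≤ ∑ y, (Afun W P t₁ y ^ (1+t₁)⁻¹) ^ a * (Afun W P t₂ y ^ (1+t₂)⁻¹) ^ b := by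
          rw [Nfun]
          exact Finset.sum_le_sum fun y _ => stepB y
      _ ≤ (∑ y, Afun W P t₁ y ^ (1+t₁)⁻¹) ^ a * (∑ y, Afun W P t₂ y ^ (1+t₂)⁻¹) ^ b :=
          enn_holder _ _ ha hb hab
      _ = Nfun W P t₁ ^ a * Nfun W P t₂ ^ b := by rw [Nfun, Nfun]
  -- transfer to the reals
  have hreal : (Nfun W P t).toReal
      ≤ (Nfun W P t₁).toReal ^ a * (Nfun W P t₂).toReal ^ b := by
    have := ENNReal.toReal_mono
      (ENNReal.mul_ne_top
        (ENNReal.rpow_ne_top_of_nonneg ha.le (N_ne_top hW hP ht₁))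
        (ENNReal.rpow_ne_top_of_nonneg hb.le (N_ne_top hW hP ht₂))) stepC
    rwa [ENNReal.toReal_mul, ← ENNReal.toReal_rpow, ← ENNReal.toReal_rpow] at this
  have hN₁ : 0 < (Nfun W P t₁).toReal := N_toReal_pos hW hP ht₁
  have hN₂ : 0 < (Nfun W P t₂).toReal := N_toReal_pos hW hP ht₂
  have hlog : Real.logb 2 (Nfun W P t).toReal
      ≤ a * Real.logb 2 (Nfun W P t₁).toReal + b * Real.logb 2 (Nfun W P t₂).toReal := by
    calc Real.logb 2 (Nfun W P t).toReal
        ≤ Real.logb 2 ((Nfun W P t₁).toReal ^ a * (Nfun W P t₂).toReal ^ b) :=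
          Real.logb_le_logb_of_le (by norm_num) (N_toReal_pos hW hP ht) hreal
      _ = a * Real.logb 2 (Nfun W P t₁).toReal + b * Real.logb 2 (Nfun W P t₂).toReal := by
          rw [Real.logb_mul (by positivity) (by positivity),
            Real.logb_rpow_eq_mul_logb_of_pos hN₁, Real.logb_rpow_eq_mul_logb_of_pos hN₂]
  calc hfun W P t
      ≤ (1 + t) * (a * Real.logb 2 (Nfun W P t₁).toReal
          + b * Real.logb 2 (Nfun W P t₂).toReal) := by
        rw [hfun]
        exact mul_le_mul_of_nonneg_left hlog hα.le
    _ = θ * hfun W P t₁ + θ' * hfun W P t₂ := by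
        rw [hfun, hfun, hadef, hbdef]
        field_simp


theorem margX_joint (hW : IsChannel W) : margX (joint P W) = P := by
  funext x
  rw [margX]
  simp only [joint]
  rw [← Finset.mul_sum, hW x, mul_one]

/-- The Sibson-type inner sum `∑_y A_y · Q(y)^{-t}`. -/
def SQfun (W : X → Y → ℝ≥0∞) (P : X → ℝ≥0∞) (t : ℝ) (Q : Y → ℝ≥0∞) : ℝ≥0∞ :=
  ∑ y, Afun W P t y * Q y ^ (-t)

theorem renyiD_sum_eq (hW : IsChannel W) (hP : IsDist P) (ht : 0 < t)
    (Q : Y → ℝ≥0∞) (hQ : ∀ y, Q y ≠ ⊤) :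
    ∑ p : X × Y, joint P W p ^ (1 + t) * (P p.1 * Q p.2) ^ (1 - (1 + t))
      = SQfun W P t Q := by
  have hpt : ∀ x y, joint P W (x, y) ^ (1 + t) * (P x * Q y) ^ (1 - (1 + t))
      = P x * W x y ^ (1 + t) * Q y ^ (-t) := by
    intro x y
    simp only [joint]
    by_cases hx : P x = 0
    · rw [hx, zero_mul, zero_mul, ENNReal.zero_rpow_of_pos (by linarith), zero_mul,
        zero_mul, zero_mul]
    rw [show (1 : ℝ) - (1 + t) = -t by ring,
      ENNReal.mul_rpow_of_ne_top (dist_ne_top hP x) (dist_ne_top (hW x) y),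
      ENNReal.mul_rpow_of_ne_top (dist_ne_top hP x) (hQ y),
      show P x ^ (1+t) * W x y ^ (1+t) * (P x ^ (-t) * Q y ^ (-t))
        = (P x ^ (1+t) * P x ^ (-t)) * (W x y ^ (1+t) * Q y ^ (-t)) by ring,
      ← ENNReal.rpow_add _ _ hx (dist_ne_top hP x),
      show (1 + t) + (-t) = 1 by ring, ENNReal.rpow_one]
    ring
  rw [Fintype.sum_prod_type, SQfun]
  calc ∑ x, ∑ y, joint P W (x, y) ^ (1 + t) * (P x * Q y) ^ (1 - (1 + t))
      = ∑ x, ∑ y, P x * W x y ^ (1 + t) * Q y ^ (-t) := by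
        exact Finset.sum_congr rfl fun x _ => Finset.sum_congr rfl fun y _ => hpt x y
    _ = ∑ y, ∑ x, P x * W x y ^ (1 + t) * Q y ^ (-t) := Finset.sum_comm
    _ = ∑ y, Afun W P t y * Q y ^ (-t) := by
        refine Finset.sum_congr rfl fun y _ => ?_
        rw [Afun, Finset.sum_mul]

theorem SQ_ge [Nonempty Y] (hW : IsChannel W) (hP : IsDist P) (ht : 0 < t)
    {Q : Y → ℝ≥0∞} (hQ : IsDist Q) :
    Nfun W P t ^ (1 + t) ≤ SQfun W P t Q := by
  have hα : (0:ℝ) < 1 + t := by linarith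
  by_cases hz : ∃ y, Q y = 0 ∧ Afun W P t y ≠ 0
  · obtain ⟨y, hQy, hAy⟩ := hz
    have hterm : Afun W P t y * Q y ^ (-t) = ⊤ := by
      rw [hQy, ENNReal.zero_rpow_of_neg (by linarith), ENNReal.mul_top hAy]
    have : SQfun W P t Q = ⊤ := by
      rw [eq_top_iff, ← hterm, SQfun]
      exact Finset.single_le_sum (f := fun y => Afun W P t y * Q y ^ (-t))
        (fun i _ => zero_le) (Finset.mem_univ y)
    rw [this]
    exact le_top
  push_neg at hz
  have key : ∀ y, Afun W P t y ^ (1+t)⁻¹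
      = (Afun W P t y * Q y ^ (-t)) ^ (1+t)⁻¹ * Q y ^ (t / (1+t)) := by
    intro y
    by_cases hQy : Q y = 0
    · rw [hQy, hz y hQy, ENNReal.zero_rpow_of_pos (by positivity), zero_mul,
        ENNReal.zero_rpow_of_pos (by positivity),
        ENNReal.zero_rpow_of_pos (by positivity), mul_zero]
    have hQyt : Q y ^ (-t) ≠ ⊤ := by
      simp only [ne_eq, ENNReal.rpow_eq_top_iff, not_or, not_and_or]
      exact ⟨Or.inl hQy, Or.inl (dist_ne_top hQ y)⟩
    rw [ENNReal.mul_rpow_of_ne_top (A_ne_top hW hP ht.le y) hQyt, ← ENNReal.rpow_mul,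
      mul_assoc, ← ENNReal.rpow_add _ _ hQy (dist_ne_top hQ y),
      show -t * (1+t)⁻¹ + t / (1+t) = 0 by field_simp; ring, ENNReal.rpow_zero, mul_one]
  have hN : Nfun W P t ≤ SQfun W P t Q ^ (1+t)⁻¹ := by
    calc Nfun W P t
        = ∑ y, (Afun W P t y * Q y ^ (-t)) ^ (1+t)⁻¹ * Q y ^ (t / (1+t)) := by
          rw [Nfun]
          exact Finset.sum_congr rfl fun y _ => key y
      _ ≤ (∑ y, Afun W P t y * Q y ^ (-t)) ^ (1+t)⁻¹ * (∑ y, Q y) ^ (t / (1+t)) :=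
          enn_holder _ _ (by positivity) (by positivity) (by field_simp)
      _ = SQfun W P t Q ^ (1+t)⁻¹ := by
          rw [hQ, ENNReal.one_rpow, mul_one, SQfun]
  calc Nfun W P t ^ (1+t) ≤ (SQfun W P t Q ^ (1+t)⁻¹) ^ (1+t) :=
        ENNReal.rpow_le_rpow hN hα.le
    _ = SQfun W P t Q := by
        rw [← ENNReal.rpow_mul, inv_mul_cancel₀ hα.ne', ENNReal.rpow_one]

/-- The Sibson optimizer. -/
def Qstar (W : X → Y → ℝ≥0∞) (P : X → ℝ≥0∞) (t : ℝ) (y : Y) : ℝ≥0∞ :=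
  Afun W P t y ^ (1+t)⁻¹ / Nfun W P t

theorem Qstar_dist [Nonempty Y] (hW : IsChannel W) (hP : IsDist P) (ht : 0 ≤ t) :
    IsDist (Qstar W P t) := by
  rw [IsDist]
  simp only [Qstar]
  simp only [div_eq_mul_inv]
  rw [← Finset.sum_mul, ← Nfun, ENNReal.mul_inv_cancel (N_pos hW hP ht).ne' (N_ne_top hW hP ht)]

theorem SQstar [Nonempty Y] (hW : IsChannel W) (hP : IsDist P) (ht : 0 < t) :
    SQfun W P t (Qstar W P t) = Nfun W P t ^ (1 + t) := by
  have hα : (0:ℝ) < 1 + t := by linarith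
  have hN0 : Nfun W P t ≠ 0 := (N_pos hW hP ht.le).ne'
  have hNt : Nfun W P t ≠ ⊤ := N_ne_top hW hP ht.le
  have key : ∀ y, Afun W P t y * Qstar W P t y ^ (-t)
      = Afun W P t y ^ (1+t)⁻¹ * Nfun W P t ^ t := by
    intro y
    by_cases hA : Afun W P t y = 0
    · rw [hA, zero_mul, ENNReal.zero_rpow_of_pos (by positivity), zero_mul]
    have hAt : Afun W P t y ≠ ⊤ := A_ne_top hW hP ht.le y
    rw [Qstar, div_eq_mul_inv,
      ENNReal.mul_rpow_of_ne_top (ENNReal.rpow_ne_top_of_nonneg (by positivity) hAt)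
        (by simp [hN0]),
      ← ENNReal.rpow_mul, ENNReal.inv_rpow, ENNReal.rpow_neg, inv_inv]
    rw [show Afun W P t y * (Afun W P t y ^ ((1+t)⁻¹ * -t) * Nfun W P t ^ t)
        = (Afun W P t y * Afun W P t y ^ ((1+t)⁻¹ * -t)) * Nfun W P t ^ t by ring]
    congr 1
    nth_rewrite 1 [← ENNReal.rpow_one (Afun W P t y)]
    rw [← ENNReal.rpow_add _ _ hA hAt]
    congr 1
    field_simp
    ring
  rw [SQfun, Finset.sum_congr rfl fun y _ => key y, ← Finset.sum_mul, ← Nfun]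
  nth_rewrite 1 [← ENNReal.rpow_one (Nfun W P t)]
  rw [← ENNReal.rpow_add _ _ hN0 hNt]

theorem elog2_coe {x : ℝ≥0∞} (h0 : x ≠ 0) (ht : x ≠ ⊤) :
    elog2 x = ((Real.logb 2 x.toReal : ℝ) : EReal) := by
  rw [elog2, if_neg h0, if_neg ht]

theorem elog2_mono {x y : ℝ≥0∞} (h : x ≤ y) : elog2 x ≤ elog2 y := by
  by_cases hx : x = 0
  · simp [elog2, hx]
  by_cases hy : y = ⊤
  · rw [elog2, if_neg hx]
    by_cases hx' : x = ⊤ <;> simp [elog2, hy, hx']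
  have hx' : x ≠ ⊤ := ne_top_of_le_ne_top hy h
  have hy0 : y ≠ 0 := fun h0 => hx (le_antisymm (h0 ▸ h) (zero_le))
  rw [elog2_coe hx hx', elog2_coe hy0 hy, EReal.coe_le_coe_iff]
  exact Real.logb_le_logb_of_le (by norm_num) (ENNReal.toReal_pos hx hx')
    (ENNReal.toReal_mono hy h)

theorem renyiD_eval (hW : IsChannel W) (hP : IsDist P) (ht : 0 < t)
    (Q : Y → ℝ≥0∞) (hQ : ∀ y, Q y ≠ ⊤) :
    renyiD (ENNReal.ofReal (1 + t)) (joint P W) (fun p => P p.1 * Q p.2)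
      = ((t⁻¹ : ℝ) : EReal) * elog2 (SQfun W P t Q) := by
  have h1t : (0:ℝ) < 1 + t := by linarith
  have hα0 : ENNReal.ofReal (1 + t) ≠ 0 := by
    simp [ENNReal.ofReal_eq_zero]
    linarith
  have hα1 : ENNReal.ofReal (1 + t) ≠ 1 := by
    rw [ne_eq, ← ENNReal.ofReal_one, ENNReal.ofReal_eq_ofReal_iff h1t.le (by norm_num)]
    linarith
  have hαtop : ENNReal.ofReal (1 + t) ≠ ⊤ := ENNReal.ofReal_ne_top
  have hαre : (ENNReal.ofReal (1 + t)).toReal = 1 + t := ENNReal.toReal_ofReal h1t.le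
  rw [renyiD, if_neg hα0, if_neg hα1, if_neg hαtop, hαre,
    show (1 + t - 1 : ℝ)⁻¹ = t⁻¹ by norm_num]
  congr 1
  rw [renyiD_sum_eq hW hP ht Q hQ]

theorem MI_eq [Nonempty Y] (hW : IsChannel W) (hP : IsDist P) (ht : 0 < t) :
    renyiMI (ENNReal.ofReal (1 + t)) (joint P W)
      = ((t⁻¹ * hfun W P t : ℝ) : EReal) := by
  have hα : (0:ℝ) < 1 + t := by linarith
  have hN0 : Nfun W P t ≠ 0 := (N_pos hW hP ht.le).ne'
  have hNt : Nfun W P t ≠ ⊤ := N_ne_top hW hP ht.le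
  have hM0 : Nfun W P t ^ (1+t) ≠ 0 := by
    simp only [ne_eq, ENNReal.rpow_eq_zero_iff, not_or, not_and_or]
    exact ⟨Or.inl hN0, Or.inl hNt⟩
  have hMt : Nfun W P t ^ (1+t) ≠ ⊤ := ENNReal.rpow_ne_top_of_nonneg hα.le hNt
  have hlog : elog2 (Nfun W P t ^ (1+t))
      = (((1 + t) * Real.logb 2 (Nfun W P t).toReal : ℝ) : EReal) := by
    rw [elog2_coe hM0 hMt, ← ENNReal.toReal_rpow,
      Real.logb_rpow_eq_mul_logb_of_pos (N_toReal_pos hW hP ht.le)]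
  have hQd : ∀ (Q : {Q : Y → ℝ≥0∞ // IsDist Q}), ∀ y, Q.1 y ≠ ⊤ :=
    fun Q y => dist_ne_top Q.2 y
  have hval : ∀ (Q : {Q : Y → ℝ≥0∞ // IsDist Q}),
      renyiD (ENNReal.ofReal (1 + t)) (joint P W)
        (fun p => margX (joint P W) p.1 * Q.1 p.2)
      = ((t⁻¹ : ℝ) : EReal) * elog2 (SQfun W P t Q.1) := by
    intro Q
    rw [margX_joint hW]
    exact renyiD_eval hW hP ht Q.1 (hQd Q)
  rw [renyiMI]
  apply le_antisymm
  · refine le_trans (iInf_le _ ⟨Qstar W P t, Qstar_dist hW hP ht.le⟩) ?_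
    rw [hval ⟨Qstar W P t, Qstar_dist hW hP ht.le⟩, SQstar hW hP ht, hlog,
      ← EReal.coe_mul, hfun]
  · refine le_iInf fun Q => ?_
    rw [hval Q]
    calc ((t⁻¹ * hfun W P t : ℝ) : EReal)
        = ((t⁻¹ : ℝ) : EReal) * elog2 (Nfun W P t ^ (1+t)) := by
          rw [hlog, ← EReal.coe_mul, hfun]
      _ ≤ ((t⁻¹ : ℝ) : EReal) * elog2 (SQfun W P t Q.1) := by
          apply mul_le_mul_of_nonneg_left (elog2_mono (SQ_ge hW hP ht Q.2))
          exact_mod_cast inv_nonneg.2 ht.le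

theorem unifDist [Nonempty X] : IsDist (fun _ : X => ((Fintype.card X : ℝ≥0∞))⁻¹) := by
  rw [IsDist, Finset.sum_const, Finset.card_univ, nsmul_eq_mul, ENNReal.mul_inv_cancel]
  · exact_mod_cast Fintype.card_ne_zero
  · exact ENNReal.natCast_ne_top _

theorem ereal_iSup_coe {ι : Sort*} [Nonempty ι] (f : ι → ℝ) {B : ℝ} (h : ∀ i, f i ≤ B) :
    (⨆ i, ((f i : ℝ) : EReal)) = ((⨆ i, f i : ℝ) : EReal) := by
  have hbdd : BddAbove (Set.range f) := ⟨B, by rintro _ ⟨i, rfl⟩; exact h i⟩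
  set L : EReal := ⨆ i, ((f i : ℝ) : EReal) with hL
  have hLtop : L ≠ ⊤ := by
    refine ne_top_of_le_ne_top (EReal.coe_ne_top B) (iSup_le fun i => ?_)
    exact_mod_cast h i
  have hLbot : L ≠ ⊥ := by
    obtain ⟨i⟩ := ‹Nonempty ι›
    intro hb
    have h2 := le_iSup (fun i => ((f i : ℝ) : EReal)) i
    rw [← hL, hb] at h2
    exact (EReal.coe_ne_bot (f i)) (le_bot_iff.1 h2)
  apply le_antisymm
  · exact iSup_le fun i => EReal.coe_le_coe_iff.2 (le_ciSup hbdd i)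
  · have hfle : ∀ i, f i ≤ L.toReal := by
      intro i
      have h2 := le_iSup (fun i => ((f i : ℝ) : EReal)) i
      rw [← hL, ← EReal.coe_toReal hLtop hLbot] at h2
      exact_mod_cast h2
    rw [← EReal.coe_toReal hLtop hLbot]
    exact EReal.coe_le_coe_iff.2 (ciSup_le hfle)

/-- `bigG t = sup_P (1+t) log₂ N_P^t = t·I_{1+t}(W)` for `t > 0`. -/
def bigG (W : X → Y → ℝ≥0∞) : ℝ → ℝ :=
  fun t => ⨆ P : {P : X → ℝ≥0∞ // IsDist P}, hfun W P.1 t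

variable [Nonempty X] [Nonempty Y]

theorem distSubNonempty : Nonempty {P : X → ℝ≥0∞ // IsDist P} := ⟨⟨_, unifDist⟩⟩

theorem cap_coe (hW : IsChannel W) (ht : 0 < t) :
    renyiCap (ENNReal.ofReal (1 + t)) W
      = ((⨆ P : {P : X → ℝ≥0∞ // IsDist P}, t⁻¹ * hfun W P.1 t : ℝ) : EReal) := by
  haveI := distSubNonempty (X := X)
  rw [renyiCap]
  have h1 : ∀ P : {P : X → ℝ≥0∞ // IsDist P},
      renyiMI (ENNReal.ofReal (1 + t)) (joint P.1 W)
        = ((t⁻¹ * hfun W P.1 t : ℝ) : EReal) :=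
    fun P => MI_eq hW P.2 ht
  rw [iSup_congr h1]
  refine ereal_iSup_coe _ (B := Real.logb 2 (Fintype.card Y)) fun P => ?_
  calc t⁻¹ * hfun W P.1 t ≤ t⁻¹ * (t * Real.logb 2 (Fintype.card Y)) :=
        mul_le_mul_of_nonneg_left (hfun_le hW P.2 ht.le) (inv_nonneg.2 ht.le)
    _ = Real.logb 2 (Fintype.card Y) := by field_simp

theorem bigG_bdd (hW : IsChannel W) (ht : 0 ≤ t) :
    ∀ P : {P : X → ℝ≥0∞ // IsDist P}, hfun W P.1 t ≤ t * Real.logb 2 (Fintype.card Y) :=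
  fun P => hfun_le hW P.2 ht

theorem f_eq_bigG (hW : IsChannel W) (ht : 0 < t) :
    t * (renyiCap (ENNReal.ofReal (1 + t)) W).toReal = bigG W t := by
  haveI := distSubNonempty (X := X)
  rw [cap_coe hW ht, EReal.toReal_coe, Real.mul_iSup_of_nonneg ht.le, bigG]
  congr 1
  funext P
  rw [← mul_assoc, mul_inv_cancel₀ ht.ne', one_mul]

theorem bigG_zero (hW : IsChannel W) : bigG W 0 = 0 := by
  haveI := distSubNonempty (X := X)
  rw [bigG]
  have : ∀ P : {P : X → ℝ≥0∞ // IsDist P}, hfun W P.1 0 = 0 :=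
    fun P => hfun_zero hW P.2
  rw [iSup_congr this, ciSup_const]

theorem bigG_convex (hW : IsChannel W) : ConvexOn ℝ (Set.Ici (0:ℝ)) (bigG W) := by
  haveI := distSubNonempty (X := X)
  refine ⟨convex_Ici 0, ?_⟩
  intro t₁ ht₁ t₂ ht₂ θ θ' hθ hθ' hθθ
  simp only [Set.mem_Ici] at ht₁ ht₂
  simp only [smul_eq_mul]
  have htc : (0:ℝ) ≤ θ * t₁ + θ' * t₂ := by positivity
  have hbdd : ∀ u, 0 ≤ u → BddAbove (Set.range fun P : {P : X → ℝ≥0∞ // IsDist P} =>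
      hfun W P.1 u) := fun u hu => ⟨u * Real.logb 2 (Fintype.card Y),
    by rintro _ ⟨P, rfl⟩; exact hfun_le hW P.2 hu⟩
  rw [bigG]
  refine ciSup_le fun P => ?_
  calc hfun W P.1 (θ * t₁ + θ' * t₂)
      ≤ θ * hfun W P.1 t₁ + θ' * hfun W P.1 t₂ := by
        have := (hfun_convex hW P.2).2 (Set.mem_Ici.2 ht₁) (Set.mem_Ici.2 ht₂) hθ hθ' hθθ
        simpa using this
    _ ≤ θ * bigG W t₁ + θ' * bigG W t₂ := by
        refine add_le_add ?_ ?_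
        · exact mul_le_mul_of_nonneg_left (le_ciSup (hbdd t₁ ht₁) P) hθ
        · exact mul_le_mul_of_nonneg_left (le_ciSup (hbdd t₂ ht₂) P) hθ'

end Lemma22Aux

/-- **Lemma 22.**  Let `R̂(s)` be the right derivative at `t = s` of the convex
function `t ↦ t·I_{1+t}(W)`.  Then:
(i) if `r ≥ R̂(s)`, then `sup_{t ≥ 0} t(r - I_{1+t}(W)) = sup_{t ≥ s} t(r - I_{1+t}(W))`;
(ii) if `0 ≤ r < R̂(s)`, then `sup_{t ≥ s} t(r - I_{1+t}(W)) = s(r - I_{1+s}(W))`;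
(iii) `sup_{t ≥ 0} t(R̂(s) - I_{1+t}(W)) = s(R̂(s) - I_{1+s}(W))`. -/
theorem renyi_maximization
    {X Y : Type*} [Fintype X] [Fintype Y] [Nonempty X] [Nonempty Y]
    (W : X → Y → ℝ≥0∞) (hW : IsChannel W) (s : ℝ) (hs : 0 < s) (Rhat : ℝ)
    (hR : HasDerivWithinAt (fun t : ℝ => t * (renyiCap (ENNReal.ofReal (1 + t)) W).toReal)
      Rhat (Set.Ici s) s) :
    (∀ r : ℝ, Rhat ≤ r →
      (⨆ t : {t : ℝ // 0 ≤ t},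
          ((t.1 : ℝ) : EReal) * ((r : EReal) - renyiCap (ENNReal.ofReal (1 + t.1)) W)) =
        ⨆ t : {t : ℝ // s ≤ t},
          ((t.1 : ℝ) : EReal) * ((r : EReal) - renyiCap (ENNReal.ofReal (1 + t.1)) W)) ∧
    (∀ r : ℝ, 0 ≤ r → r < Rhat →
      (⨆ t : {t : ℝ // s ≤ t},
          ((t.1 : ℝ) : EReal) * ((r : EReal) - renyiCap (ENNReal.ofReal (1 + t.1)) W)) =
        ((s : ℝ) : EReal) * ((r : EReal) - renyiCap (ENNReal.ofReal (1 + s)) W)) ∧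
    ((⨆ t : {t : ℝ // 0 ≤ t},
        ((t.1 : ℝ) : EReal) * ((Rhat : EReal) - renyiCap (ENNReal.ofReal (1 + t.1)) W)) =
      ((s : ℝ) : EReal) * ((Rhat : EReal) - renyiCap (ENNReal.ofReal (1 + s)) W)) := by
  classical
  set f : ℝ → ℝ := fun t : ℝ => t * (renyiCap (ENNReal.ofReal (1 + t)) W).toReal with hfdef
  have hf0 : f 0 = 0 := by simp [hfdef]
  have hfG : ∀ t : ℝ, 0 ≤ t → f t = bigG W t := by
    intro t ht
    rcases eq_or_lt_of_le ht with h0 | hpos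
    · rw [← h0, hf0, bigG_zero hW]
    · exact f_eq_bigG hW hpos
  have hconv : ConvexOn ℝ (Set.Ici (0:ℝ)) f := by
    refine ⟨convex_Ici 0, fun x hx y hy a b ha hb hab => ?_⟩
    have hmem : a • x + b • y ∈ Set.Ici (0:ℝ) := (convex_Ici 0) hx hy ha hb hab
    rw [hfG x (Set.mem_Ici.1 hx), hfG y (Set.mem_Ici.1 hy), hfG _ (Set.mem_Ici.1 hmem)]
    exact (bigG_convex hW).2 hx hy ha hb hab
  have htends : Filter.Tendsto (fun v => (f v - f s) / (v - s)) (nhdsWithin s (Set.Ioi s)) (nhds Rhat) := by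
    rw [hasDerivWithinAt_iff_tendsto_slope, Set.Ici_sdiff_left] at hR
    have hsl : (fun v => (f v - f s) / (v - s)) = slope f s :=
      funext fun v => (slope_def_field f s v).symm
    rw [hsl]
    exact hR
  have S1 : ∀ u, s < u → Rhat * (u - s) ≤ f u - f s := by
    intro u hu
    have hm : ∀ v ∈ Set.Ioo s u, (f v - f s) / (v - s) ≤ (f u - f s) / (u - s) := by
      intro v hv
      exact hconv.secant_mono (Set.mem_Ici.2 hs.le)
        (Set.mem_Ici.2 (by linarith [hv.1])) (Set.mem_Ici.2 (by linarith))
        hv.1.ne' hu.ne' hv.2.le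
    have hle : Rhat ≤ (f u - f s) / (u - s) :=
      le_of_tendsto htends (Filter.eventually_of_mem
        (Ioo_mem_nhdsGT_of_mem ⟨le_refl s, hu⟩) hm)
    rw [le_div_iff₀ (by linarith)] at hle
    linarith
  have S2 : ∀ u, 0 ≤ u → u < s → f s - f u ≤ Rhat * (s - u) := by
    intro u hu hus
    have hm : ∀ v ∈ Set.Ioi s, (f s - f u) / (s - u) ≤ (f v - f s) / (v - s) := by
      intro v hv
      exact hconv.slope_mono_adjacent (Set.mem_Ici.2 hu)
        (Set.mem_Ici.2 (by linarith [Set.mem_Ioi.1 hv])) hus (Set.mem_Ioi.1 hv)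
    have hle : (f s - f u) / (s - u) ≤ Rhat :=
      ge_of_tendsto htends (eventually_mem_nhdsWithin.mono hm)
    rw [div_le_iff₀ (by linarith)] at hle
    linarith
  have term_eq : ∀ (r : ℝ) (t : ℝ), 0 ≤ t →
      ((t : EReal) * ((r : EReal) - renyiCap (ENNReal.ofReal (1 + t)) W))
        = (((t * r - f t : ℝ)) : EReal) := by
    intro r t ht
    rcases eq_or_lt_of_le ht with h0 | hpos
    · rw [← h0]
      have hz : ((0:ℝ) : EReal) = 0 := rfl
      rw [hz, EReal.zero_mul]
      have hzz : (0 * r - f 0 : ℝ) = 0 := by rw [hf0]; ring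
      rw [hzz]
      exact EReal.coe_zero.symm
    · have hc := cap_coe (W := W) hW hpos
      rw [hc, ← EReal.coe_sub, ← EReal.coe_mul]
      norm_cast
      have hft : f t = t * ((⨆ P : {P : X → ℝ≥0∞ // IsDist P}, t⁻¹ * hfun W P.1 t : ℝ)) := by
        rw [hfdef]
        simp only
        rw [hc, EReal.toReal_coe]
      rw [hft]
      ring
  have key_le : ∀ r : ℝ, Rhat ≤ r → ∀ t, 0 ≤ t → t ≤ s →
      t * r - f t ≤ s * r - f s := by
    intro r hr t ht hts
    rcases eq_or_lt_of_le hts with h | h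
    · rw [h]
    · have h1 := S2 t ht h
      have h2 : Rhat * (s - t) ≤ r * (s - t) :=
        mul_le_mul_of_nonneg_right hr (by linarith)
      nlinarith
  have key_ge : ∀ r : ℝ, r ≤ Rhat → ∀ t, s ≤ t →
      t * r - f t ≤ s * r - f s := by
    intro r hr t hts
    rcases eq_or_lt_of_le hts with h | h
    · rw [← h]
    · have h1 := S1 t h
      have h2 : r * (t - s) ≤ Rhat * (t - s) :=
        mul_le_mul_of_nonneg_right hr (by linarith)
      nlinarith
  refine ⟨?_, ?_, ?_⟩
  · -- part (i)
    intro r hr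
    apply le_antisymm
    · refine iSup_le fun tt => ?_
      by_cases hts : s ≤ tt.1
      · exact le_iSup_of_le ⟨tt.1, hts⟩ (le_of_eq rfl)
      · push_neg at hts
        calc ((tt.1 : ℝ) : EReal) * ((r : EReal) - renyiCap (ENNReal.ofReal (1 + tt.1)) W)
            = (((tt.1 * r - f tt.1 : ℝ)) : EReal) := term_eq r tt.1 tt.2
          _ ≤ (((s * r - f s : ℝ)) : EReal) :=
              EReal.coe_le_coe_iff.2 (key_le r hr tt.1 tt.2 hts.le)
          _ = ((s : ℝ) : EReal) * ((r : EReal) - renyiCap (ENNReal.ofReal (1 + s)) W) :=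
              (term_eq r s hs.le).symm
          _ ≤ _ := le_iSup_of_le ⟨s, le_refl s⟩ (le_of_eq rfl)
    · exact iSup_le fun tt => le_iSup_of_le ⟨tt.1, hs.le.trans tt.2⟩ (le_of_eq rfl)
  · -- part (ii)
    intro r _ hr
    apply le_antisymm
    · refine iSup_le fun tt => ?_
      calc ((tt.1 : ℝ) : EReal) * ((r : EReal) - renyiCap (ENNReal.ofReal (1 + tt.1)) W)
          = (((tt.1 * r - f tt.1 : ℝ)) : EReal) := term_eq r tt.1 (hs.le.trans tt.2)
        _ ≤ (((s * r - f s : ℝ)) : EReal) :=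
            EReal.coe_le_coe_iff.2 (key_ge r hr.le tt.1 tt.2)
        _ = ((s : ℝ) : EReal) * ((r : EReal) - renyiCap (ENNReal.ofReal (1 + s)) W) :=
            (term_eq r s hs.le).symm
    · exact le_iSup_of_le ⟨s, le_refl s⟩ (le_of_eq rfl)
  · -- part (iii)
    apply le_antisymm
    · refine iSup_le fun tt => ?_
      by_cases hts : tt.1 ≤ s
      · calc ((tt.1 : ℝ) : EReal) * ((Rhat : EReal) - renyiCap (ENNReal.ofReal (1 + tt.1)) W)
            = (((tt.1 * Rhat - f tt.1 : ℝ)) : EReal) := term_eq Rhat tt.1 tt.2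
          _ ≤ (((s * Rhat - f s : ℝ)) : EReal) :=
              EReal.coe_le_coe_iff.2 (key_le Rhat (le_refl _) tt.1 tt.2 hts)
          _ = ((s : ℝ) : EReal) * ((Rhat : EReal) - renyiCap (ENNReal.ofReal (1 + s)) W) :=
              (term_eq Rhat s hs.le).symm
      · push_neg at hts
        calc ((tt.1 : ℝ) : EReal) * ((Rhat : EReal) - renyiCap (ENNReal.ofReal (1 + tt.1)) W)
            = (((tt.1 * Rhat - f tt.1 : ℝ)) : EReal) := term_eq Rhat tt.1 tt.2
          _ ≤ (((s * Rhat - f s : ℝ)) : EReal) :=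
              EReal.coe_le_coe_iff.2 (key_ge Rhat (le_refl _) tt.1 hts.le)
          _ = ((s : ℝ) : EReal) * ((Rhat : EReal) - renyiCap (ENNReal.ofReal (1 + s)) W) :=
              (term_eq Rhat s hs.le).symm
    · exact le_iSup_of_le ⟨s, hs.le⟩ (le_of_eq rfl)

end RST
end
end

section
/- (One-shot error bound for rejection sampling.) Let P, Q be probability distributions on a finite set X with supp(P) ⊆ supp(Q), and let N, Ñ be positive integers. Define the sub-distribution P̄(x) := min{P(x), N·Q(x)}, the abort probability p := (1 − (1/N)·∑_x P̄(x))^Ñ, and the sampling distribution S := (1−p)·P̄/(∑_x P̄(x)) + p·Q. Then for every s ∈ (0,∞): D_{1+s}(P‖S) ≤ (1/(s·ln 2))·2^{−s(log₂ N − D_{1+s}(P‖Q))} + p/((1−p)·ln 2); and for s = ∞: D_∞(P‖S) ≤ max{D_∞(P‖Q) − log₂ N, 0} + p/((1−p)·ln 2). -/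
open scoped ENNReal NNReal BigOperators Classical
open Filter

noncomputable section

namespace RST

lemma elog2_mono_s16 : Monotone elog2 := by
  intro a b hab
  by_cases ha0 : a = 0
  · simp [elog2, ha0]
  by_cases hbt : b = ⊤
  · simp [elog2, hbt]
  have hb0 : b ≠ 0 := fun h => ha0 (le_antisymm (h ▸ hab) (zero_le : (0:ℝ≥0∞) ≤ a))
  have hat : a ≠ ⊤ := fun h => hbt (top_le_iff.mp (h ▸ hab))
  simp only [elog2, if_neg ha0, if_neg hat, if_neg hb0, if_neg hbt]
  exact EReal.coe_le_coe_iff.mpr <| Real.logb_le_logb_of_le one_lt_two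
      (ENNReal.toReal_pos ha0 hat) (ENNReal.toReal_mono hbt hab)

lemma elog2_eq (a : ℝ≥0∞) (h0 : a ≠ 0) (ht : a ≠ ⊤) :
    elog2 a = ((Real.logb 2 a.toReal : ℝ) : EReal) := by
  unfold elog2; simp [h0, ht]

lemma coe_ennreal_real {x : ℝ≥0∞} (hx : x ≠ ⊤) : (x : EReal) = ((x.toReal : ℝ) : EReal) := by
  rw [← EReal.coe_toReal (x := (x : EReal)) (by simpa using hx) (by simp),
    EReal.toReal_coe_ennreal]

lemma epow2_coe (x : ℝ) : epow2 ((x : ℝ) : EReal) = ENNReal.ofReal ((2 : ℝ) ^ x) := by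
  unfold epow2
  simp


/-- **One-shot error bound for rejection sampling** (Section IV-A).
With `P̄(x) = min{P(x), N·Q(x)}`, abort probability
`p = (1 - (1/N) ∑_x P̄(x))^Ñ` and sampling distribution
`S = (1-p)·P̄/∑P̄ + p·Q`, one has for every `s ∈ (0,∞)`:
`D_{1+s}(P‖S) ≤ (1/(s ln 2)) 2^{-s(log₂ N - D_{1+s}(P‖Q))} + p/((1-p) ln 2)`,
and `D_∞(P‖S) ≤ |D_∞(P‖Q) - log₂ N|⁺ + p/((1-p) ln 2)`. -/
theorem rejection_sampling_error_bound
    {X : Type*} [Fintype X]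
    (P Q : X → ℝ≥0∞) (hP : IsDist P) (hQ : IsDist Q)
    (hsupp : ∀ x, P x ≠ 0 → Q x ≠ 0)
    (N Nt : ℕ) (hN : 0 < N) (hNt : 0 < Nt)
    (Pbar : X → ℝ≥0∞) (hPbar : ∀ x, Pbar x = min (P x) ((N : ℝ≥0∞) * Q x))
    (p : ℝ≥0∞) (hp : p = (1 - (N : ℝ≥0∞)⁻¹ * ∑ x, Pbar x) ^ Nt)
    (S : X → ℝ≥0∞) (hS : ∀ x, S x = (1 - p) * (Pbar x / ∑ x', Pbar x') + p * Q x) :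
    (∀ s : ℝ, 0 < s →
      renyiD (ENNReal.ofReal (1 + s)) P S ≤
        ((1 / (s * Real.log 2) : ℝ) : EReal) *
            ((epow2 (((-s : ℝ) : EReal) *
              (((Real.logb 2 N : ℝ) : EReal) -
                renyiD (ENNReal.ofReal (1 + s)) P Q)) : ℝ≥0∞) : EReal) +
          ((p / ((1 - p) * ENNReal.ofReal (Real.log 2)) : ℝ≥0∞) : EReal)) ∧
    (renyiD ⊤ P S ≤
      max (renyiD ⊤ P Q - ((Real.logb 2 N : ℝ) : EReal)) 0 +
        ((p / ((1 - p) * ENNReal.ofReal (Real.log 2)) : ℝ≥0∞) : EReal)) := by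
  classical
  have hPle : ∀ x, P x ≤ 1 := fun x =>
    hP ▸ Finset.single_le_sum (fun _ _ => zero_le) (Finset.mem_univ x)
  have hQle : ∀ x, Q x ≤ 1 := fun x =>
    hQ ▸ Finset.single_le_sum (fun _ _ => zero_le) (Finset.mem_univ x)
  have hPt : ∀ x, P x ≠ ⊤ := fun x => ((hPle x).trans_lt ENNReal.one_lt_top).ne
  have hQt : ∀ x, Q x ≠ ⊤ := fun x => ((hQle x).trans_lt ENNReal.one_lt_top).ne
  obtain ⟨x₀, hx₀⟩ : ∃ x, P x ≠ 0 := by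
    by_contra h
    push_neg at h
    rw [IsDist, Finset.sum_eq_zero (fun x _ => h x)] at hP
    exact zero_ne_one hP
  have hNne : (N : ℝ≥0∞) ≠ 0 := Nat.cast_ne_zero.mpr hN.ne'
  have hNtop : (N : ℝ≥0∞) ≠ ⊤ := ENNReal.natCast_ne_top N
  have hNr : (0 : ℝ) < N := Nat.cast_pos.mpr hN
  have hPbar_le : ∀ x, Pbar x ≤ P x := fun x => (hPbar x) ▸ min_le_left _ _
  have hPbar_t : ∀ x, Pbar x ≠ ⊤ := fun x => ((hPbar_le x).trans_lt (hPt x).lt_top).ne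
  have hPbar_ne : ∀ x, P x ≠ 0 → Pbar x ≠ 0 := by
    intro x hx
    rw [hPbar x]
    exact (lt_min (pos_iff_ne_zero.mpr hx)
      (ENNReal.mul_pos hNne (hsupp x hx))).ne'
  have hSb_le1 : (∑ x', Pbar x') ≤ 1 := hP ▸ Finset.sum_le_sum (fun x _ => hPbar_le x)
  have hSb_ne : (∑ x', Pbar x') ≠ 0 := by
    intro h
    exact hPbar_ne x₀ hx₀ (Finset.sum_eq_zero_iff.mp h x₀ (Finset.mem_univ x₀))
  have hSb_t : (∑ x', Pbar x') ≠ ⊤ := (hSb_le1.trans_lt ENNReal.one_lt_top).ne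
  have hp_lt : p < 1 := by
    rw [hp]
    have hbase : 1 - (N : ℝ≥0∞)⁻¹ * ∑ x, Pbar x < 1 :=
      ENNReal.sub_lt_self ENNReal.one_ne_top one_ne_zero
        (ENNReal.mul_pos (ENNReal.inv_ne_zero.mpr hNtop) hSb_ne).ne'
    calc (1 - (N : ℝ≥0∞)⁻¹ * ∑ x, Pbar x) ^ Nt
        ≤ (1 - (N : ℝ≥0∞)⁻¹ * ∑ x, Pbar x) ^ 1 :=
          pow_le_pow_of_le_one zero_le (tsub_le_self.trans le_rfl) hNt
      _ < 1 := by simpa using hbase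
  have hp_t : p ≠ ⊤ := (hp_lt.trans ENNReal.one_lt_top).ne
  have h1p_ne : (1 : ℝ≥0∞) - p ≠ 0 := (tsub_pos_of_lt hp_lt).ne'
  have h1p_t : (1 : ℝ≥0∞) - p ≠ ⊤ := (tsub_le_self.trans_lt ENNReal.one_lt_top).ne
  set a : ℝ := ((1 : ℝ≥0∞) - p).toReal with ha
  have ha_pos : 0 < a := ENNReal.toReal_pos h1p_ne h1p_t
  have hpa : p.toReal = 1 - a := by
    rw [ha, ENNReal.toReal_sub_of_le hp_lt.le ENNReal.one_ne_top, ENNReal.toReal_one]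
    ring
  have ha_le1 : a ≤ 1 := by
    rw [ha]
    calc ((1 : ℝ≥0∞) - p).toReal ≤ (1 : ℝ≥0∞).toReal :=
      ENNReal.toReal_mono ENNReal.one_ne_top tsub_le_self
    _ = 1 := ENNReal.toReal_one
  have hlog2_pos : (0 : ℝ) < Real.log 2 := Real.log_pos one_lt_two
  set tailR : ℝ := p.toReal / (a * Real.log 2) with htailR
  have htail : ((p / ((1 - p) * ENNReal.ofReal (Real.log 2)) : ℝ≥0∞) : EReal)
      = (tailR : EReal) := by
    rw [coe_ennreal_real (x := p / ((1 - p) * ENNReal.ofReal (Real.log 2)))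
      (ENNReal.div_lt_top hp_t (mul_ne_zero h1p_ne
        (ENNReal.ofReal_pos.mpr hlog2_pos).ne')).ne]
    congr 1
    rw [ENNReal.toReal_div, ENNReal.toReal_mul, ENNReal.toReal_ofReal hlog2_pos.le]
  have hkey_tail : -Real.logb 2 a ≤ tailR := by
    have h1 : Real.log a⁻¹ ≤ a⁻¹ - 1 := Real.log_le_sub_one_of_pos (inv_pos.mpr ha_pos)
    rw [Real.log_inv] at h1
    have hinv : a * a⁻¹ = 1 := mul_inv_cancel₀ ha_pos.ne'
    rw [htailR, hpa, Real.logb, ← neg_div, div_le_div_iff₀ hlog2_pos (by positivity)]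
    nlinarith [mul_pos ha_pos hlog2_pos]
  have hS_ge : ∀ x, (1 - p) * Pbar x ≤ S x := by
    intro x
    rw [hS x]
    refine le_trans ?_ le_self_add
    apply mul_le_mul_right
    rw [ENNReal.le_div_iff_mul_le (Or.inl hSb_ne) (Or.inl hSb_t)]
    exact mul_le_of_le_one_right' hSb_le1
  constructor
  · -- finite order part
    intro s hs
    have hs1 : (0 : ℝ) < 1 + s := by linarith
    have hα0 : ENNReal.ofReal (1 + s) ≠ 0 := by
      simp [ENNReal.ofReal_eq_zero]; linarith
    have hα1 : ENNReal.ofReal (1 + s) ≠ 1 := by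
      rw [Ne, ENNReal.ofReal_eq_one]; intro h; linarith
    have hαt : ENNReal.ofReal (1 + s) ≠ ⊤ := ENNReal.ofReal_ne_top
    have hαr : (ENNReal.ofReal (1 + s)).toReal = 1 + s := ENNReal.toReal_ofReal hs1.le
    have hco : ((1 : ℝ) + s - 1)⁻¹ = s⁻¹ := by ring_nf
    have hex : (1 : ℝ) - (1 + s) = -s := by ring
    simp only [renyiD, if_neg hα0, if_neg hα1, if_neg hαt, hαr, hco, hex]
    set u : ℝ≥0∞ := ∑ x, P x ^ (1 + s) * Q x ^ (-s) with hu
    set t : ℝ≥0∞ := ∑ x, P x ^ (1 + s) * S x ^ (-s) with ht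
    have hterm_t : ∀ x, P x ^ (1 + s) * Q x ^ (-s) ≠ ⊤ := by
      intro x
      by_cases hx : P x = 0
      · simp [hx, ENNReal.zero_rpow_of_pos hs1]
      · exact ENNReal.mul_ne_top (ENNReal.rpow_ne_top_of_nonneg hs1.le (hPt x))
          (by rw [ENNReal.rpow_neg]
              exact ENNReal.inv_ne_top.mpr
                (ENNReal.rpow_pos (pos_iff_ne_zero.mpr (hsupp x hx)) (hQt x)).ne')
    have hu_t : u ≠ ⊤ := by
      rw [hu]
      exact (ENNReal.sum_lt_top.mpr (fun x _ => (hterm_t x).lt_top)).ne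
    have hu_ne : u ≠ 0 := by
      rw [hu]
      intro h
      have := Finset.sum_eq_zero_iff.mp h x₀ (Finset.mem_univ x₀)
      have h1 : P x₀ ^ (1 + s) ≠ 0 := (ENNReal.rpow_pos (pos_iff_ne_zero.mpr hx₀) (hPt x₀)).ne'
      have h2 : Q x₀ ^ (-s) ≠ 0 := by
        rw [ENNReal.rpow_neg]
        exact ENNReal.inv_ne_zero.mpr (ENNReal.rpow_ne_top_of_nonneg hs.le (hQt x₀))
      exact (mul_ne_zero h1 h2) this
    set ur : ℝ := u.toReal with hur
    have hur_pos : 0 < ur := ENNReal.toReal_pos hu_ne hu_t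
    -- value of D(P‖Q)
    rw [elog2_eq u hu_ne hu_t]
    -- pointwise bound
    have hpoint : ∀ x, P x ^ (1 + s) * S x ^ (-s) ≤
        ((1 : ℝ≥0∞) - p) ^ (-s) * (P x + (N : ℝ≥0∞) ^ (-s) * (P x ^ (1 + s) * Q x ^ (-s))) := by
      intro x
      by_cases hx : P x = 0
      · simp [hx, ENNReal.zero_rpow_of_pos hs1]
      have h1 : S x ^ (-s) ≤ ((1 : ℝ≥0∞) - p) ^ (-s) * Pbar x ^ (-s) := by
        rw [← ENNReal.mul_rpow_of_ne_zero h1p_ne (hPbar_ne x hx), ENNReal.rpow_neg,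
          ENNReal.rpow_neg]
        exact ENNReal.inv_le_inv.mpr (ENNReal.rpow_le_rpow (hS_ge x) hs.le)
      have h2 : Pbar x ^ (-s) ≤ P x ^ (-s) + ((N : ℝ≥0∞) * Q x) ^ (-s) := by
        rcases min_cases (P x) ((N : ℝ≥0∞) * Q x) with ⟨hmin, _⟩ | ⟨hmin, _⟩
        · rw [hPbar x, hmin]; exact self_le_add_right _ _
        · rw [hPbar x, hmin]; exact self_le_add_left _ _
      calc P x ^ (1 + s) * S x ^ (-s)
          ≤ P x ^ (1 + s) * (((1 : ℝ≥0∞) - p) ^ (-s) * Pbar x ^ (-s)) :=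
            mul_le_mul_right h1 _
        _ ≤ P x ^ (1 + s) * (((1 : ℝ≥0∞) - p) ^ (-s) *
              (P x ^ (-s) + ((N : ℝ≥0∞) * Q x) ^ (-s))) :=
            mul_le_mul_right (mul_le_mul_right h2 _) _
        _ = ((1 : ℝ≥0∞) - p) ^ (-s) *
              (P x ^ (1 + s) * P x ^ (-s) + (N : ℝ≥0∞) ^ (-s) * (P x ^ (1 + s) * Q x ^ (-s))) := by
            rw [ENNReal.mul_rpow_of_ne_zero hNne (hsupp x hx)]
            ring
        _ = ((1 : ℝ≥0∞) - p) ^ (-s) *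
              (P x + (N : ℝ≥0∞) ^ (-s) * (P x ^ (1 + s) * Q x ^ (-s))) := by
            rw [← ENNReal.rpow_add _ _ hx (hPt x)]
            norm_num
    set B : ℝ≥0∞ := ((1 : ℝ≥0∞) - p) ^ (-s) * (1 + (N : ℝ≥0∞) ^ (-s) * u) with hB
    have htB : t ≤ B := by
      calc t ≤ ∑ x, ((1 : ℝ≥0∞) - p) ^ (-s) *
            (P x + (N : ℝ≥0∞) ^ (-s) * (P x ^ (1 + s) * Q x ^ (-s))) :=
          Finset.sum_le_sum (fun x _ => hpoint x)
        _ = B := by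
          rw [← Finset.mul_sum, Finset.sum_add_distrib, hP, ← Finset.mul_sum, hB, hu]
    have h1ps_ne : ((1 : ℝ≥0∞) - p) ^ (-s) ≠ 0 := by
      rw [ENNReal.rpow_neg]
      exact ENNReal.inv_ne_zero.mpr (ENNReal.rpow_ne_top_of_nonneg hs.le h1p_t)
    have h1ps_t : ((1 : ℝ≥0∞) - p) ^ (-s) ≠ ⊤ := by
      rw [ENNReal.rpow_neg]
      exact ENNReal.inv_ne_top.mpr (ENNReal.rpow_pos (pos_iff_ne_zero.mpr h1p_ne) h1p_t).ne'
    have hNs_t : (N : ℝ≥0∞) ^ (-s) ≠ ⊤ := by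
      rw [ENNReal.rpow_neg]
      exact ENNReal.inv_ne_top.mpr (ENNReal.rpow_pos (pos_iff_ne_zero.mpr hNne) hNtop).ne'
    have hB_t : B ≠ ⊤ := by
      rw [hB]
      exact ENNReal.mul_ne_top h1ps_t
        (ENNReal.add_ne_top.mpr ⟨ENNReal.one_ne_top, ENNReal.mul_ne_top hNs_t hu_t⟩)
    have hB_ne : B ≠ 0 := by
      rw [hB]
      exact mul_ne_zero h1ps_ne (by simp)
    set Ar : ℝ := (N : ℝ) ^ (-s) * ur with hAr
    have hAr_nonneg : 0 ≤ Ar := by positivity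
    have hBr : B.toReal = a ^ (-s) * (1 + Ar) := by
      rw [hB, ENNReal.toReal_mul, ENNReal.toReal_add ENNReal.one_ne_top
        (ENNReal.mul_ne_top hNs_t hu_t), ENNReal.toReal_mul, ENNReal.toReal_one,
        ← ENNReal.toReal_rpow, ← ENNReal.toReal_rpow, ENNReal.toReal_natCast]
    -- the LHS bound
    have hLHS : ((s⁻¹ : ℝ) : EReal) * elog2 t ≤
        ((s⁻¹ * Real.logb 2 B.toReal : ℝ) : EReal) := by
      by_cases ht0 : t = 0
      · rw [ht0]
        show ((s⁻¹ : ℝ) : EReal) * elog2 0 ≤ _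
        rw [show elog2 0 = ⊥ by simp [elog2], EReal.coe_mul_bot_of_pos (by positivity)]
        exact bot_le
      · rw [elog2_eq t ht0 (htB.trans_lt hB_t.lt_top).ne, ← EReal.coe_mul]
        apply EReal.coe_le_coe_iff.mpr
        apply mul_le_mul_of_nonneg_left _ (inv_nonneg.mpr hs.le)
        exact Real.logb_le_logb_of_le one_lt_two (ENNReal.toReal_pos ht0
          (htB.trans_lt hB_t.lt_top).ne) (ENNReal.toReal_mono hB_t htB)
    -- compute the epow2 term
    have hepow : ((epow2 (((-s : ℝ) : EReal) *
        (((Real.logb 2 N : ℝ) : EReal) - ((s⁻¹ * Real.logb 2 ur : ℝ) : EReal))) : ℝ≥0∞) : EReal)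
        = ((Ar : ℝ) : EReal) := by
      rw [← EReal.coe_sub, ← EReal.coe_mul, epow2_coe]
      have h2r : (2 : ℝ) ^ (-s * (Real.logb 2 N - s⁻¹ * Real.logb 2 ur)) = Ar := by
        have heq : -s * (Real.logb 2 N - s⁻¹ * Real.logb 2 ur)
            = Real.logb 2 N * (-s) + Real.logb 2 ur := by
          field_simp
          ring
        rw [heq, Real.rpow_add two_pos, Real.rpow_mul two_pos.le,
          Real.rpow_logb two_pos (by norm_num) hNr,
          Real.rpow_logb two_pos (by norm_num) hur_pos, hAr]
      rw [h2r, EReal.coe_ennreal_ofReal, max_eq_left hAr_nonneg]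
    rw [htail, ← EReal.coe_mul, hepow, ← EReal.coe_mul, ← EReal.coe_add]
    refine hLHS.trans (EReal.coe_le_coe_iff.mpr ?_)
    rw [hBr]
    have hlog1A : Real.log (1 + Ar) ≤ Ar := by
      have := Real.log_le_sub_one_of_pos (show (0:ℝ) < 1 + Ar by linarith)
      linarith
    have hmul : Real.logb 2 (a ^ (-s) * (1 + Ar))
        = -s * Real.logb 2 a + Real.logb 2 (1 + Ar) := by
      rw [Real.logb_mul (by positivity) (by positivity),
        Real.logb_rpow_eq_mul_logb_of_pos ha_pos]
    rw [hmul]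
    have hG : Real.logb 2 (1 + Ar) ≤ Ar / Real.log 2 := by
      rw [Real.logb]
      gcongr
    have hsne : s ≠ 0 := hs.ne'
    calc s⁻¹ * (-s * Real.logb 2 a + Real.logb 2 (1 + Ar))
        = -Real.logb 2 a + s⁻¹ * Real.logb 2 (1 + Ar) := by
          field_simp
      _ ≤ tailR + s⁻¹ * (Ar / Real.log 2) :=
          add_le_add hkey_tail (mul_le_mul_of_nonneg_left hG (inv_nonneg.mpr hs.le))
      _ = 1 / (s * Real.log 2) * Ar + tailR := by
          field_simp
          ring
  · -- infinite order part
    have hinf : ∀ (R1 R2 : X → ℝ≥0∞), renyiD ⊤ R1 R2 = elog2 (⨆ x, R1 x / R2 x) := by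
      intro R1 R2
      rw [renyiD, if_neg (by simp), if_neg (by simp), if_pos rfl]
    rw [hinf, hinf]
    have hfin : ∀ x, P x / Q x ≠ ⊤ := by
      intro x
      by_cases hx : P x = 0
      · simp [hx]
      · exact (ENNReal.div_lt_top (hPt x) (hsupp x hx)).ne
    set M : ℝ≥0∞ := ⨆ x, P x / Q x with hM
    have hM_t : M ≠ ⊤ := by
      have hle : M ≤ ∑ x, P x / Q x :=
        iSup_le fun x => Finset.single_le_sum (f := fun x => P x / Q x)
          (fun _ _ => zero_le) (Finset.mem_univ x)
      exact (hle.trans_lt (ENNReal.sum_lt_top.mpr fun x _ => (hfin x).lt_top)).ne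
    have hM0 : M ≠ 0 := by
      intro h
      have hle : P x₀ / Q x₀ ≤ M := le_iSup (fun x => P x / Q x) x₀
      rw [h, le_zero_iff, ENNReal.div_eq_zero_iff] at hle
      rcases hle with h1 | h1
      · exact hx₀ h1
      · exact hQt x₀ h1
    set m : ℝ := M.toReal with hm
    have hm_pos : 0 < m := ENNReal.toReal_pos hM0 hM_t
    set R : ℝ≥0∞ := (1 - p)⁻¹ * max (M / N) 1 with hR
    have hsup_le : (⨆ x, P x / S x) ≤ R := by
      apply iSup_le
      intro x
      by_cases hx : P x = 0
      · simp [hx]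
      have h1 : P x / S x ≤ P x / ((1 - p) * Pbar x) :=
        ENNReal.div_le_div_left (hS_ge x) _
      have h2 : P x / ((1 - p) * Pbar x) = (1 - p)⁻¹ * (P x / Pbar x) := by
        rw [div_eq_mul_inv, ENNReal.mul_inv (Or.inl h1p_ne) (Or.inl h1p_t),
          div_eq_mul_inv]
        ring
      refine h1.trans ?_
      rw [h2, hR]
      apply mul_le_mul_right
      rcases min_cases (P x) ((N : ℝ≥0∞) * Q x) with ⟨hmin, _⟩ | ⟨hmin, _⟩
      · rw [hPbar x, hmin, ENNReal.div_self hx (hPt x)]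
        exact le_max_right _ _
      · rw [hPbar x, hmin]
        refine le_trans ?_ (le_max_left _ _)
        have h3 : P x / ((N : ℝ≥0∞) * Q x) = (P x / Q x) / N := by
          rw [mul_comm, div_eq_mul_inv, ENNReal.mul_inv (Or.inl (hsupp x hx)) (Or.inl (hQt x)),
            ← mul_assoc, div_eq_mul_inv, div_eq_mul_inv]
        rw [h3]
        exact ENNReal.div_le_div_right (le_iSup (fun x => P x / Q x) x) _
    have hMN_t : M / (N : ℝ≥0∞) ≠ ⊤ := (ENNReal.div_lt_top hM_t hNne).ne
    have hmax_t : max (M / (N : ℝ≥0∞)) 1 ≠ ⊤ := by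
      rcases max_cases (M / (N : ℝ≥0∞)) (1 : ℝ≥0∞) with ⟨hc, _⟩ | ⟨hc, _⟩
      · rw [hc]; exact hMN_t
      · rw [hc]; exact ENNReal.one_ne_top
    have hR0 : R ≠ 0 :=
      mul_ne_zero (ENNReal.inv_ne_zero.mpr h1p_t) (by simp)
    have hRt : R ≠ ⊤ := ENNReal.mul_ne_top (ENNReal.inv_ne_top.mpr h1p_ne) hmax_t
    have hL : elog2 (⨆ x, P x / S x) ≤ ((Real.logb 2 R.toReal : ℝ) : EReal) :=
      (elog2_mono_s16 hsup_le).trans_eq (elog2_eq R hR0 hRt)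
    rw [elog2_eq M hM0 hM_t, htail]
    refine hL.trans ?_
    rw [← EReal.coe_sub]
    have hmaxco : max (((Real.logb 2 m - Real.logb 2 N : ℝ)) : EReal) (0 : EReal)
        = ((max (Real.logb 2 m - Real.logb 2 N) 0 : ℝ) : EReal) := by
      rcases le_total (Real.logb 2 m - Real.logb 2 N) (0 : ℝ) with hc | hc
      · rw [max_eq_right hc, max_eq_right (α := EReal)
          (by exact_mod_cast EReal.coe_le_coe_iff.mpr hc), EReal.coe_zero]
      · rw [max_eq_left hc, max_eq_left (α := EReal)
          (by exact_mod_cast EReal.coe_le_coe_iff.mpr hc)]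
    rw [hmaxco, ← EReal.coe_add]
    apply EReal.coe_le_coe_iff.mpr
    -- real-valued computation
    have hRr : R.toReal = a⁻¹ * (max (M / N) 1).toReal := by
      rw [hR, ENNReal.toReal_mul, ENNReal.toReal_inv]
    have hNr0 : (N : ℝ) ≠ 0 := hNr.ne'
    have hmain : Real.logb 2 (max (M / (N : ℝ≥0∞)) 1).toReal
        ≤ max (Real.logb 2 m - Real.logb 2 N) 0 := by
      rcases le_total (M / (N : ℝ≥0∞)) 1 with hc | hc
      · rw [max_eq_right hc]
        simp
      · rw [max_eq_left hc, ENNReal.toReal_div, ENNReal.toReal_natCast, ← hm,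
          Real.logb_div hm_pos.ne' hNr0]
        exact le_max_left _ _
    have hlogR : Real.logb 2 R.toReal
        = -Real.logb 2 a + Real.logb 2 (max (M / (N : ℝ≥0∞)) 1).toReal := by
      rw [hRr, Real.logb_mul (by positivity) ?h2]
      · rw [Real.logb_inv]
      · have : (max (M / (N : ℝ≥0∞)) 1).toReal ≥ 1 := by
          rw [ge_iff_le, show (1:ℝ) = (1:ℝ≥0∞).toReal by simp]
          exact ENNReal.toReal_mono hmax_t (le_max_right _ _)
        linarith
    rw [hlogR]
    exact add_le_add hkey_tail hmain |>.trans_eq (add_comm _ _) |>.trans_eq rfl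



end RST
end
end
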